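/- Let S be a monoid and Q a right S-act. Then Q is InC-injective if and only if Q^θ is injective, where Q^θ denotes Q itself if Q contains a zero element, and Q with one externally adjoined zero element θ (with θ·s = θ for all s ∈ S) otherwise. -/

import Mathlib

universe u

/-- A right `S`-act structure on a nonempty type `A`: a right action of the monoid `S`. -/
class RightAct (S : Type u) [Monoid S] (A : Type u) : Type u where
  act : A → S → A
  act_one : ∀ a : A, act a 1 = a
  act_mul : ∀ (a : A) (s t : S), act (act a s) t = act a (s * t)
  nonempty : Nonempty A

infixl:70 " ⊛ " => RightAct.act

/-- `S` is left reversible: every two right ideals (equiv. principal ones) intersect. -/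
def LeftReversible (S : Type u) [Monoid S] : Prop :=
  ∀ a b : S, ∃ u v : S, a * u = b * v

/-- A left zero element of the monoid `S`. -/
def IsLeftZero (S : Type u) [Monoid S] (z : S) : Prop :=
  ∀ s : S, z * s = z

/-- `f : A → B` is a homomorphism of right `S`-acts. -/
def IsActHom (S : Type u) [Monoid S] {A B : Type u} [RightAct S A] [RightAct S B]
    (f : A → B) : Prop :=
  ∀ (a : A) (s : S), f (a ⊛ s) = f a ⊛ s

/-- The restriction of `f : A → B` to the subset `C` is a homomorphism of right `S`-acts. -/
def IsActHomOn (S : Type u) [Monoid S] {A B : Type u} [RightAct S A] [RightAct S B]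
    (f : A → B) (C : Set A) : Prop :=
  ∀ a ∈ C, ∀ s : S, f (a ⊛ s) = f a ⊛ s

/-- A subact: a nonempty subset closed under the action. -/
def IsSubact (S : Type u) [Monoid S] {A : Type u} [RightAct S A] (C : Set A) : Prop :=
  C.Nonempty ∧ ∀ a ∈ C, ∀ s : S, a ⊛ s ∈ C

/-- A zero element of an act: fixed by the action of every `s ∈ S`. -/
def IsZeroElem (S : Type u) [Monoid S] {A : Type u} [RightAct S A] (θ : A) : Prop :=
  ∀ s : S, θ ⊛ s = θ

/-- A subset `D` (viewed as an act) is decomposable: it is the disjoint union of two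
nonempty subacts. -/
def DecomposableSet (S : Type u) [Monoid S] {A : Type u} [RightAct S A] (D : Set A) : Prop :=
  ∃ B C : Set A, IsSubact S B ∧ IsSubact S C ∧ B ∪ C = D ∧ B ∩ C = ∅

/-- A subset (viewed as an act) is indecomposable. -/
def IndecomposableSet (S : Type u) [Monoid S] {A : Type u} [RightAct S A] (D : Set A) : Prop :=
  ¬ DecomposableSet S D

/-- The act `A` is decomposable. -/
def Decomposable (S : Type u) [Monoid S] (A : Type u) [RightAct S A] : Prop :=
  DecomposableSet S (Set.univ : Set A)

/-- The act `A` is indecomposable. -/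
def Indecomposable (S : Type u) [Monoid S] (A : Type u) [RightAct S A] : Prop :=
  ¬ Decomposable S A

/-- A cyclic act: generated by a single element. -/
def CyclicAct (S : Type u) [Monoid S] (A : Type u) [RightAct S A] : Prop :=
  ∃ a : A, ∀ x : A, ∃ s : S, x = a ⊛ s

/-- `A` is a retract of `B`. -/
def IsRetractOf (S : Type u) [Monoid S] (A B : Type u) [RightAct S A] [RightAct S B] : Prop :=
  ∃ (i : A → B) (p : B → A), IsActHom S i ∧ IsActHom S p ∧ ∀ a : A, p (i a) = a

/-- `Q` is an injective act: every homomorphism from a subact `C` of any act `B` into `Q`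
extends to `B`. -/
def ActInjective (S : Type u) [Monoid S] (Q : Type u) [RightAct S Q] : Prop :=
  ∀ (B : Type u) [RightAct S B], ∀ C : Set B, IsSubact S C →
    ∀ f : B → Q, IsActHomOn S f C →
      ∃ g : B → Q, IsActHom S g ∧ Set.EqOn g f C

/-- `Q` is InC-injective: injective relative to all embeddings into indecomposable acts. -/
def InCInjective (S : Type u) [Monoid S] (Q : Type u) [RightAct S Q] : Prop :=
  ∀ (B : Type u) [RightAct S B], Indecomposable S B → ∀ C : Set B, IsSubact S C →
    ∀ f : B → Q, IsActHomOn S f C →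
      ∃ g : B → Q, IsActHom S g ∧ Set.EqOn g f C

/-- `Q` is InD-injective: injective relative to all embeddings of indecomposable acts. -/
def InDInjective (S : Type u) [Monoid S] (Q : Type u) [RightAct S Q] : Prop :=
  ∀ (B : Type u) [RightAct S B], ∀ C : Set B, IsSubact S C → IndecomposableSet S C →
    ∀ f : B → Q, IsActHomOn S f C →
      ∃ g : B → Q, IsActHom S g ∧ Set.EqOn g f C

/-- `Q` is PInD-injective: every monomorphism from an indecomposable subact extends. -/
def PInDInjective (S : Type u) [Monoid S] (Q : Type u) [RightAct S Q] : Prop :=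
  ∀ (B : Type u) [RightAct S B], ∀ C : Set B, IsSubact S C → IndecomposableSet S C →
    ∀ f : B → Q, IsActHomOn S f C → Set.InjOn f C →
      ∃ g : B → Q, IsActHom S g ∧ Set.EqOn g f C

/-- `A` is quasi injective: homomorphisms from subacts of `A` to `A` extend to `A`. -/
def QuasiInjective (S : Type u) [Monoid S] (A : Type u) [RightAct S A] : Prop :=
  ∀ C : Set A, IsSubact S C → ∀ f : A → A, IsActHomOn S f C →
    ∃ g : A → A, IsActHom S g ∧ Set.EqOn g f C

/-- `A` is pseudo injective: monomorphisms from subacts of any act into `A` extend. -/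
def PseudoInjective (S : Type u) [Monoid S] (A : Type u) [RightAct S A] : Prop :=
  ∀ (C : Type u) [RightAct S C], ∀ B : Set C, IsSubact S B →
    ∀ f : C → A, IsActHomOn S f B → Set.InjOn f B →
      ∃ g : C → A, IsActHom S g ∧ Set.EqOn g f B

/-- A subact `Q` of `A` (viewed as an act in its own right) is injective. -/
def ActInjectiveSet (S : Type u) [Monoid S] {A : Type u} [RightAct S A] (Q : Set A) : Prop :=
  ∀ (B : Type u) [RightAct S B], ∀ C : Set B, IsSubact S C →
    ∀ f : B → A, IsActHomOn S f C → (∀ c ∈ C, f c ∈ Q) →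
      ∃ g : B → A, IsActHom S g ∧ (∀ b : B, g b ∈ Q) ∧ Set.EqOn g f C

/-- A subact `Q` of `A` (viewed as an act in its own right) is InD-injective. -/
def InDInjectiveSet (S : Type u) [Monoid S] {A : Type u} [RightAct S A] (Q : Set A) : Prop :=
  ∀ (B : Type u) [RightAct S B], ∀ C : Set B, IsSubact S C → IndecomposableSet S C →
    ∀ f : B → A, IsActHomOn S f C → (∀ c ∈ C, f c ∈ Q) →
      ∃ g : B → A, IsActHom S g ∧ (∀ b : B, g b ∈ Q) ∧ Set.EqOn g f C

/-- A subact `Q` of `A` (viewed as an act in its own right) is PInD-injective. -/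
def PInDInjectiveSet (S : Type u) [Monoid S] {A : Type u} [RightAct S A] (Q : Set A) : Prop :=
  ∀ (B : Type u) [RightAct S B], ∀ C : Set B, IsSubact S C → IndecomposableSet S C →
    ∀ f : B → A, IsActHomOn S f C → Set.InjOn f C → (∀ c ∈ C, f c ∈ Q) →
      ∃ g : B → A, IsActHom S g ∧ (∀ b : B, g b ∈ Q) ∧ Set.EqOn g f C

/-- The monoid `S` as a right act over itself, by multiplication. -/
instance selfAct (S : Type u) [Monoid S] : RightAct S S where
  act a s := a * s
  act_one := mul_one
  act_mul a s t := mul_assoc a s t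
  nonempty := ⟨1⟩

/-- `Q` is weakly injective: homomorphisms from right ideals of `S` into `Q` extend to `S`. -/
def WeaklyInjective (S : Type u) [Monoid S] (Q : Type u) [RightAct S Q] : Prop :=
  ∀ I : Set S, IsSubact S I → ∀ f : S → Q, IsActHomOn S f I →
    ∃ g : S → Q, IsActHom S g ∧ Set.EqOn g f I

/-- The relation whose equivalence closure has the indecomposable components as classes. -/
def ActRel (S : Type u) [Monoid S] {A : Type u} [RightAct S A] (a b : A) : Prop :=
  ∃ s : S, b = a ⊛ s

/-- The indecomposable component of the element `a` of an act. -/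
def ActComponent (S : Type u) [Monoid S] {A : Type u} [RightAct S A] (a : A) : Set A :=
  {b | Relation.EqvGen (ActRel S) a b}

/-- The act `A` with an externally adjoined zero (`none`). -/
instance optionAct (S : Type u) [Monoid S] (A : Type u) [RightAct S A] :
    RightAct S (Option A) where
  act o s := o.map (· ⊛ s)
  act_one o := by cases o <;> simp [RightAct.act_one]
  act_mul o s t := by cases o <;> simp [RightAct.act_mul]
  nonempty := ⟨none⟩


open scoped Classical

section Helpers

variable {S : Type u} [Monoid S]

lemma opt_act_none {A : Type u} [RightAct S A] (s : S) :
    (none : Option A) ⊛ s = none := rfl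

lemma opt_act_some {A : Type u} [RightAct S A] (a : A) (s : S) :
    (some a : Option A) ⊛ s = some (a ⊛ s) := rfl

/-- Subtype act on a nonempty closed subset. -/
def subAct {B : Type u} [RightAct S B] (D : Set B) (hne : D.Nonempty)
    (hcl : ∀ a ∈ D, ∀ s : S, a ⊛ s ∈ D) : RightAct S {x // x ∈ D} where
  act d s := ⟨d.1 ⊛ s, hcl _ d.2 s⟩
  act_one d := Subtype.ext (RightAct.act_one d.1)
  act_mul d s t := Subtype.ext (RightAct.act_mul d.1 s t)
  nonempty := ⟨⟨hne.choose, hne.choose_spec⟩⟩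

/-- A cyclic act is indecomposable. -/
lemma indec_of_cyclic {A : Type u} [RightAct S A] (a : A)
    (h : ∀ x : A, ∃ s : S, x = a ⊛ s) : Indecomposable S A := by
  rintro ⟨B₁, B₂, h₁, h₂, hu, hi⟩
  have key : ∀ X Y : Set A, IsSubact S X → a ∈ X → X ∩ Y = ∅ → Y.Nonempty → False := by
    rintro X Y hX haX hXY ⟨c, hc⟩
    obtain ⟨s, rfl⟩ := h c
    have hmem : a ⊛ s ∈ X := hX.2 a haX s
    have : a ⊛ s ∈ X ∩ Y := ⟨hmem, hc⟩
    rw [hXY] at this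
    exact this
  have ha : a ∈ B₁ ∪ B₂ := by rw [hu]; exact Set.mem_univ a
  cases ha with
  | inl ha => exact key B₁ B₂ h₁ ha hi h₂.1
  | inr ha => exact key B₂ B₁ h₂ ha (by rw [Set.inter_comm]; exact hi) h₁.1

/-- Zorn argument: if homomorphisms can always be extended one more orbit, the act
`T` is injective. -/
lemma actInjective_of_step {T : Type u} [RightAct S T]
    (H : ∀ (B : Type u) [RightAct S B], ∀ E : Set B, IsSubact S E → ∀ b : B,
      ∀ g : B → T, IsActHomOn S g E →
        ∃ g' : B → T, IsActHomOn S g' (E ∪ {x | ∃ s : S, x = b ⊛ s}) ∧ Set.EqOn g' g E) :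
    ActInjective S T := by
  intro B _ C hC f hf
  let P := {p : Set B × (B → T) //
    C ⊆ p.1 ∧ IsSubact S p.1 ∧ IsActHomOn S p.2 p.1 ∧ Set.EqOn p.2 f C}
  letI : Preorder P :=
    { le := fun p q => p.val.1 ⊆ q.val.1 ∧ Set.EqOn q.val.2 p.val.2 p.val.1
      le_refl := fun p => ⟨subset_rfl, fun x _ => rfl⟩
      le_trans := by
        rintro p q r ⟨h1, h2⟩ ⟨h3, h4⟩
        exact ⟨h1.trans h3, fun x hx => (h4 (h1 hx)).trans (h2 hx)⟩ }
  have hchains : ∀ c : Set P, IsChain (· ≤ ·) c → BddAbove c := by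
    intro c hc
    rcases c.eq_empty_or_nonempty with rfl | hcne
    · exact ⟨⟨(C, f), subset_rfl, hC, hf, fun x _ => rfl⟩, by simp [upperBounds]⟩
    · set E : Set B := ⋃ p ∈ c, (p : P).val.1 with hEdef
      set g : B → T := fun x =>
        if h : ∃ p : P, p ∈ c ∧ x ∈ p.val.1 then h.choose.val.2 x else f x with hgdef
      have hagree : ∀ p : P, p ∈ c → ∀ x ∈ p.val.1, g x = p.val.2 x := by
        intro p hp x hx
        have hex : ∃ q : P, q ∈ c ∧ x ∈ q.val.1 := ⟨p, hp, hx⟩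
        have hq := hex.choose_spec
        have : g x = hex.choose.val.2 x := dif_pos hex
        rw [this]
        rcases hc.total hq.1 hp with hle | hle
        · exact (hle.2 hq.2).symm ▸ rfl
        · exact hle.2 hx
      obtain ⟨p₀, hp₀⟩ := hcne
      have hCE : C ⊆ E := fun x hx => Set.mem_biUnion hp₀ (p₀.prop.1 hx)
      have hmemE : ∀ x, x ∈ E ↔ ∃ p : P, p ∈ c ∧ x ∈ p.val.1 := by
        intro x
        constructor
        · intro hx
          rcases Set.mem_iUnion₂.mp hx with ⟨p, hp, hxp⟩
          exact ⟨p, hp, hxp⟩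
        · rintro ⟨p, hp, hxp⟩
          exact Set.mem_biUnion hp hxp
      refine ⟨⟨(E, g), hCE, ⟨hC.1.mono hCE, ?_⟩, ?_, ?_⟩, ?_⟩
      · intro x hx s
        rcases (hmemE x).mp hx with ⟨p, hp, hxp⟩
        exact (hmemE _).mpr ⟨p, hp, p.prop.2.1.2 x hxp s⟩
      · intro x hx s
        rcases (hmemE x).mp hx with ⟨p, hp, hxp⟩
        have hxs : x ⊛ s ∈ p.val.1 := p.prop.2.1.2 x hxp s
        show g (x ⊛ s) = g x ⊛ s
        rw [hagree p hp x hxp, hagree p hp _ hxs]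
        exact p.prop.2.2.1 x hxp s
      · intro x hx
        show g x = f x
        rw [hagree p₀ hp₀ x (p₀.prop.1 hx)]
        exact p₀.prop.2.2.2 hx
      · intro p hp
        exact ⟨fun x hx => (hmemE x).mpr ⟨p, hp, hx⟩, fun x hx => hagree p hp x hx⟩
  obtain ⟨m, hm⟩ := zorn_le hchains
  by_cases huniv : m.val.1 = Set.univ
  · refine ⟨m.val.2, fun a s => m.prop.2.2.1 a (huniv ▸ Set.mem_univ a) s, m.prop.2.2.2⟩
  · exfalso
    have : ∃ b : B, b ∉ m.val.1 := by
      by_contra hno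
      push_neg at hno
      exact huniv (Set.eq_univ_of_forall hno)
    obtain ⟨b, hb⟩ := this
    obtain ⟨g', hg'hom, hg'eq⟩ := H B m.val.1 m.prop.2.1 b m.val.2 m.prop.2.2.1
    have hDcl : ∀ a ∈ ({x | ∃ s : S, x = b ⊛ s} : Set B), ∀ s : S,
        a ⊛ s ∈ ({x | ∃ s : S, x = b ⊛ s} : Set B) := by
      rintro a ⟨t, rfl⟩ s
      exact ⟨t * s, RightAct.act_mul b t s⟩
    have hsub : IsSubact S (m.val.1 ∪ {x | ∃ s : S, x = b ⊛ s}) := by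
      refine ⟨m.prop.2.1.1.mono Set.subset_union_left, ?_⟩
      rintro a (ha | ha) s
      · exact Or.inl (m.prop.2.1.2 a ha s)
      · exact Or.inr (hDcl a ha s)
    have hCsub : C ⊆ m.val.1 ∪ {x | ∃ s : S, x = b ⊛ s} :=
      m.prop.1.trans Set.subset_union_left
    have hEqC : Set.EqOn g' f C := fun x hx => (hg'eq (m.prop.1 hx)).trans (m.prop.2.2.2 hx)
    have hle : m ≤ (⟨(m.val.1 ∪ {x | ∃ s : S, x = b ⊛ s}, g'), hCsub, hsub, hg'hom, hEqC⟩ : P) :=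
      ⟨Set.subset_union_left, hg'eq⟩
    have := (hm hle).1
    exact hb (this (Or.inr ⟨1, (RightAct.act_one b).symm⟩))

/-- One-step extension over an orbit, for an InC-injective act with a zero. -/
lemma step_zero {Q : Type u} [RightAct S Q] (θ : Q) (hθ : IsZeroElem S θ)
    (hQ : InCInjective S Q) :
    ∀ (B : Type u) [RightAct S B], ∀ E : Set B, IsSubact S E → ∀ b : B,
      ∀ g : B → Q, IsActHomOn S g E →
        ∃ g' : B → Q, IsActHomOn S g' (E ∪ {x | ∃ s : S, x = b ⊛ s}) ∧ Set.EqOn g' g E := by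
  intro B _ E hE b g hg
  set D : Set B := {x | ∃ s : S, x = b ⊛ s} with hDdef
  have hbD : b ∈ D := ⟨1, (RightAct.act_one b).symm⟩
  have hclD : ∀ a ∈ D, ∀ s : S, a ⊛ s ∈ D := by
    rintro a ⟨t, rfl⟩ s
    exact ⟨t * s, RightAct.act_mul b t s⟩
  by_cases hED : (E ∩ D).Nonempty
  · letI actD : RightAct S {x // x ∈ D} := subAct D ⟨b, hbD⟩ hclD
    have hindec : Indecomposable S {x // x ∈ D} := by
      refine indec_of_cyclic ⟨b, hbD⟩ ?_
      rintro ⟨x, hx⟩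
      obtain ⟨s, rfl⟩ := hx
      exact ⟨s, rfl⟩
    obtain ⟨h, hhom, heq⟩ := hQ {x // x ∈ D} hindec {d | d.1 ∈ E}
      ⟨⟨⟨hED.choose, hED.choose_spec.2⟩, hED.choose_spec.1⟩, fun d hd s => hE.2 d.1 hd s⟩
      (fun d => g d.1) (fun d hd s => hg d.1 hd s)
    refine ⟨fun x => if hx : x ∈ D then h ⟨x, hx⟩ else g x, ?_, ?_⟩
    · intro x hx s
      by_cases hxD : x ∈ D
      · have hxsD : x ⊛ s ∈ D := hclD x hxD s
        simp only [dif_pos hxD, dif_pos hxsD]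
        exact hhom ⟨x, hxD⟩ s
      · have hxE : x ∈ E := hx.resolve_right hxD
        have hxsE : x ⊛ s ∈ E := hE.2 x hxE s
        by_cases hxsD : x ⊛ s ∈ D
        · simp only [dif_pos hxsD, dif_neg hxD]
          have : h ⟨x ⊛ s, hxsD⟩ = g (x ⊛ s) := heq (show (⟨x ⊛ s, hxsD⟩ : {x // x ∈ D}).1 ∈ E from hxsE)
          rw [this]
          exact hg x hxE s
        · simp only [dif_neg hxsD, dif_neg hxD]
          exact hg x hxE s
    · intro x hxE
      by_cases hxD : x ∈ D
      · simp only [dif_pos hxD]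
        exact heq (show (⟨x, hxD⟩ : {x // x ∈ D}).1 ∈ E from hxE)
      · simp only [dif_neg hxD]
  · refine ⟨fun x => if x ∈ D then θ else g x, ?_, ?_⟩
    · intro x hx s
      by_cases hxD : x ∈ D
      · have hxsD : x ⊛ s ∈ D := hclD x hxD s
        simp only [if_pos hxD, if_pos hxsD]
        exact (hθ s).symm
      · have hxE : x ∈ E := hx.resolve_right hxD
        have hxsE : x ⊛ s ∈ E := hE.2 x hxE s
        have hxsD : x ⊛ s ∉ D := fun hh => hED ⟨x ⊛ s, hxsE, hh⟩
        simp only [if_neg hxD, if_neg hxsD]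
        exact hg x hxE s
    · intro x hxE
      have hxD : x ∉ D := fun hh => hED ⟨x, hxE, hh⟩
      simp only [if_neg hxD]

/-- The "Rees quotient" of the subact `D` by its subact `N`, realized concretely on
`Option {x // x ∈ D \ N}` with `none` playing the role of the collapsed zero. -/
noncomputable def reesAct {B : Type u} [RightAct S B] (D N : Set B)
    (hD : ∀ a ∈ D, ∀ s : S, a ⊛ s ∈ D) (hN : ∀ a ∈ N, ∀ s : S, a ⊛ s ∈ N) :
    RightAct S (Option {x // x ∈ D \ N}) where
  act o s :=
    match o with
    | none => none
    | some p => if h : p.1 ⊛ s ∈ N then none else some ⟨p.1 ⊛ s, hD _ p.2.1 s, h⟩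
  act_one o := by
    cases o with
    | none => rfl
    | some p =>
      have e : p.1 ⊛ (1 : S) = p.1 := RightAct.act_one p.1
      show (if h : p.1 ⊛ (1 : S) ∈ N then none
        else some ⟨p.1 ⊛ (1 : S), hD _ p.2.1 1, h⟩) = some p
      rw [dif_neg (fun h => p.2.2 (e ▸ h))]
      exact congrArg some (Subtype.ext e)
  act_mul o s t := by
    cases o with
    | none => rfl
    | some p =>
      have e : (p.1 ⊛ s) ⊛ t = p.1 ⊛ (s * t) := RightAct.act_mul p.1 s t
      dsimp only
      by_cases h1 : p.1 ⊛ s ∈ N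
      · rw [dif_pos h1, dif_pos (show p.1 ⊛ (s * t) ∈ N from e ▸ hN _ h1 t)]
      · rw [dif_neg h1]
        dsimp only
        by_cases h2 : (p.1 ⊛ s) ⊛ t ∈ N
        · rw [dif_pos h2, dif_pos (show p.1 ⊛ (s * t) ∈ N from e ▸ h2)]
        · rw [dif_neg h2, dif_neg (show p.1 ⊛ (s * t) ∉ N from fun hh => h2 (e ▸ hh))]
          exact congrArg some (Subtype.ext e)
  nonempty := ⟨none⟩

/-- One-step extension over an orbit into `Option Q`, for an InC-injective act `Q`
without a zero. -/
lemma step_nozero {Q : Type u} [RightAct S Q] (hnz : ¬ ∃ θ : Q, IsZeroElem S θ)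
    (hQ : InCInjective S Q) :
    ∀ (B : Type u) [RightAct S B], ∀ E : Set B, IsSubact S E → ∀ b : B,
      ∀ g : B → Option Q, IsActHomOn S g E →
        ∃ g' : B → Option Q, IsActHomOn S g' (E ∪ {x | ∃ s : S, x = b ⊛ s}) ∧
          Set.EqOn g' g E := by
  intro B _ E hE b g hg
  obtain ⟨q₀⟩ : Nonempty Q := @RightAct.nonempty S _ Q _
  set D : Set B := {x | ∃ s : S, x = b ⊛ s} with hDdef
  have hbD : b ∈ D := ⟨1, (RightAct.act_one b).symm⟩
  have hclD : ∀ a ∈ D, ∀ s : S, a ⊛ s ∈ D := by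
    rintro a ⟨t, rfl⟩ s
    exact ⟨t * s, RightAct.act_mul b t s⟩
  by_cases hEs : (∃ x, x ∈ E ∧ x ∈ D ∧ g x ≠ none)
  · obtain ⟨xs, hxsE, hxsD, hxsg⟩ := hEs
    by_cases hEn : (∃ x, x ∈ E ∧ x ∈ D ∧ g x = none)
    · -- mixed case: derive a zero in `Q`, contradiction
      exfalso
      obtain ⟨xn, hxnE, hxnD, hxng⟩ := hEn
      have hbE : b ∉ E := by
        intro hbE
        obtain ⟨t1, ht1⟩ := hxsD
        obtain ⟨t2, ht2⟩ := hxnD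
        cases hgb : g b with
        | none =>
          refine hxsg ?_
          rw [ht1, hg b hbE t1, hgb]
          rfl
        | some q =>
          rw [ht2, hg b hbE t2, hgb] at hxng
          exact Option.some_ne_none _ hxng
      set N : Set B := {x | x ∈ E ∧ x ∈ D ∧ g x = none} with hNdef
      have hNcl : ∀ a ∈ N, ∀ s : S, a ⊛ s ∈ N := by
        rintro a ⟨haE, haD, hag⟩ s
        refine ⟨hE.2 a haE s, hclD a haD s, ?_⟩
        rw [hg a haE s, hag]
        rfl
      have hbDN : b ∈ D \ N := ⟨hbD, fun hh => hbE hh.1⟩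
      letI actR : RightAct S (Option {x // x ∈ D \ N}) := reesAct D N hclD hNcl
      set gen : Option {x // x ∈ D \ N} := some ⟨b, hbDN⟩ with hgen
      have hcyc : ∀ r : Option {x // x ∈ D \ N}, ∃ s : S, r = gen ⊛ s := by
        intro r
        cases r with
        | none =>
          obtain ⟨t2, ht2⟩ := id hxnD
          refine ⟨t2, ?_⟩
          have : gen ⊛ t2 = none :=
            dif_pos (show b ⊛ t2 ∈ N by rw [← ht2]; exact ⟨hxnE, hxnD, hxng⟩)
          exact this.symm
        | some p =>
          obtain ⟨x, hxDN⟩ := p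
          obtain ⟨t, ht⟩ := hxDN.1
          refine ⟨t, ?_⟩
          have hco : gen ⊛ t = some ⟨b ⊛ t, hclD b hbD t, ht ▸ hxDN.2⟩ :=
            dif_neg (show b ⊛ t ∉ N from ht ▸ hxDN.2)
          rw [hco]
          exact congrArg some (Subtype.ext ht)
      have indecR : Indecomposable S (Option {x // x ∈ D \ N}) := indec_of_cyclic gen hcyc
      set C' : Set (Option {x // x ∈ D \ N}) :=
        {r | ∃ p : {x // x ∈ D \ N}, r = some p ∧ p.1 ∈ E} with hC'def
      have hstep : ∀ p : {x // x ∈ D \ N}, p.1 ∈ E → ∀ s : S,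
          ∃ hmem : p.1 ⊛ s ∈ D \ N,
            (some p : Option {x // x ∈ D \ N}) ⊛ s = some ⟨p.1 ⊛ s, hmem⟩ := by
        intro p hpE s
        have hgp : g p.1 ≠ none := fun hh => p.2.2 ⟨hpE, p.2.1, hh⟩
        obtain ⟨q, hq⟩ := Option.ne_none_iff_exists'.mp hgp
        have hgps : g (p.1 ⊛ s) ≠ none := by
          rw [hg p.1 hpE s, hq]
          exact fun hh => Option.some_ne_none _ hh
        have hsN : p.1 ⊛ s ∉ N := fun hh => hgps hh.2.2
        exact ⟨⟨hclD _ p.2.1 s, hsN⟩, dif_neg hsN⟩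
      have hC' : IsSubact S C' := by
        constructor
        · exact ⟨some ⟨xs, hxsD, fun hh => hxsg hh.2.2⟩,
            ⟨⟨xs, hxsD, fun hh => hxsg hh.2.2⟩, rfl, hxsE⟩⟩
        · rintro r ⟨p, rfl, hpE⟩ s
          obtain ⟨hmem, hco⟩ := hstep p hpE s
          rw [hco]
          exact ⟨_, rfl, hE.2 _ hpE s⟩
      set f' : Option {x // x ∈ D \ N} → Q :=
        fun r => match r with
          | none => q₀
          | some p => (g p.1).getD q₀ with hf'def
      have hf' : IsActHomOn S f' C' := by
        rintro r ⟨p, rfl, hpE⟩ s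
        obtain ⟨hmem, hco⟩ := hstep p hpE s
        have hgp : g p.1 ≠ none := fun hh => p.2.2 ⟨hpE, p.2.1, hh⟩
        obtain ⟨q, hq⟩ := Option.ne_none_iff_exists'.mp hgp
        rw [hco]
        show (g (p.1 ⊛ s)).getD q₀ = (g p.1).getD q₀ ⊛ s
        rw [hg p.1 hpE s, hq]
        rfl
      obtain ⟨h, hhom, -⟩ := hQ _ indecR C' hC' f' hf'
      exact hnz ⟨h none, fun s => (hhom none s).symm⟩
    · -- `g` is `some`-valued on `E ∩ D`
      push_neg at hEn
      letI actD : RightAct S {x // x ∈ D} := subAct D ⟨b, hbD⟩ hclD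
      have hindec : Indecomposable S {x // x ∈ D} := by
        refine indec_of_cyclic ⟨b, hbD⟩ ?_
        rintro ⟨x, hx⟩
        obtain ⟨s, rfl⟩ := hx
        exact ⟨s, rfl⟩
      have hsome : ∀ x, x ∈ E → x ∈ D → ∃ q : Q, g x = some q := by
        intro x hxE hxD
        exact Option.ne_none_iff_exists'.mp (hEn x hxE hxD)
      have hf' : IsActHomOn S (fun d : {x // x ∈ D} => (g d.1).getD q₀) {d | d.1 ∈ E} := by
        intro d hd s
        obtain ⟨q, hq⟩ := hsome d.1 hd d.2
        show (g (d.1 ⊛ s)).getD q₀ = (g d.1).getD q₀ ⊛ s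
        rw [hg d.1 hd s, hq]
        rfl
      obtain ⟨h, hhom, heq⟩ := hQ {x // x ∈ D} hindec {d | d.1 ∈ E}
        ⟨⟨⟨xs, hxsD⟩, hxsE⟩, fun d hd s => hE.2 d.1 hd s⟩
        (fun d => (g d.1).getD q₀) hf'
      refine ⟨fun x => if hx : x ∈ D then some (h ⟨x, hx⟩) else g x, ?_, ?_⟩
      · intro x hx s
        by_cases hxD : x ∈ D
        · have hxsD' : x ⊛ s ∈ D := hclD x hxD s
          simp only [dif_pos hxD, dif_pos hxsD']
          rw [show h ⟨x ⊛ s, hxsD'⟩ = h (⟨x, hxD⟩ ⊛ s) from rfl, hhom ⟨x, hxD⟩ s]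
          rfl
        · have hxE : x ∈ E := hx.resolve_right hxD
          have hxsE' : x ⊛ s ∈ E := hE.2 x hxE s
          by_cases hxsD' : x ⊛ s ∈ D
          · simp only [dif_pos hxsD', dif_neg hxD]
            obtain ⟨q', hq'⟩ := hsome (x ⊛ s) hxsE' hxsD'
            have : h ⟨x ⊛ s, hxsD'⟩ = (g (x ⊛ s)).getD q₀ :=
              heq (show (⟨x ⊛ s, hxsD'⟩ : {x // x ∈ D}).1 ∈ E from hxsE')
            rw [this, hq']
            show some q' = g x ⊛ s
            rw [← hg x hxE s, hq']
          · simp only [dif_neg hxsD', dif_neg hxD]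
            exact hg x hxE s
      · intro x hxE
        by_cases hxD : x ∈ D
        · simp only [dif_pos hxD]
          obtain ⟨q, hq⟩ := hsome x hxE hxD
          rw [show h ⟨x, hxD⟩ = (g x).getD q₀ from
            heq (show (⟨x, hxD⟩ : {x // x ∈ D}).1 ∈ E from hxE), hq]
          rfl
        · simp only [dif_neg hxD]
  · -- `g` is `none` on `E ∩ D`: extend by `none` on the orbit
    push_neg at hEs
    refine ⟨fun x => if x ∈ D then none else g x, ?_, ?_⟩
    · intro x hx s
      by_cases hxD : x ∈ D
      · have hxsD : x ⊛ s ∈ D := hclD x hxD s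
        simp only [if_pos hxD, if_pos hxsD]
        rfl
      · have hxE : x ∈ E := hx.resolve_right hxD
        have hxsE : x ⊛ s ∈ E := hE.2 x hxE s
        by_cases hxsD : x ⊛ s ∈ D
        · simp only [if_pos hxsD, if_neg hxD]
          rw [← hg x hxE s]
          exact (hEs (x ⊛ s) hxsE hxsD).symm
        · simp only [if_neg hxsD, if_neg hxD]
          exact hg x hxE s
    · intro x hxE
      by_cases hxD : x ∈ D
      · simp only [if_pos hxD]
        exact (hEs x hxE hxD).symm
      · simp only [if_neg hxD]

end Helpers

/-- `Q` is InC-injective iff `Q^θ` is injective, where `Q^θ = Q` if `Q`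
has a zero and otherwise `Q^θ` is `Q` with one externally adjoined zero
(here `Option Q`, with `none` the adjoined zero). -/
theorem inCInjective_iff_adjoinZero_injective (S : Type u) [Monoid S]
    (Q : Type u) [RightAct S Q] :
    InCInjective S Q ↔
      (if ∃ θ : Q, IsZeroElem S θ then ActInjective S Q
       else ActInjective S (Option Q)) := by
  by_cases hz : ∃ θ : Q, IsZeroElem S θ
  · rw [if_pos hz]
    constructor
    · intro hQ
      obtain ⟨θ, hθ⟩ := hz
      exact actInjective_of_step (step_zero θ hθ hQ)
    · intro hInj B _ hindec C hC f hf
      exact hInj B C hC f hf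
  · rw [if_neg hz]
    constructor
    · intro hQ
      exact actInjective_of_step (step_nozero hz hQ)
    · intro hInj B _ hindec C hC f hf
      obtain ⟨G, hG, hGeq⟩ := hInj B C hC (fun x => some (f x))
        (fun c hc s => by show some (f (c ⊛ s)) = some (f c) ⊛ s; rw [hf c hc s]; rfl)
      obtain ⟨q₀⟩ : Nonempty Q := @RightAct.nonempty S _ Q _
      have hGsome : ∀ x, G x ≠ none := by
        intro x hx
        apply hindec
        refine ⟨{y | G y = none}, {y | G y ≠ none}, ⟨⟨x, hx⟩, ?_⟩,
          ⟨⟨hC.1.choose, ?_⟩, ?_⟩, ?_, ?_⟩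
        · intro a ha s
          show G (a ⊛ s) = none
          rw [hG a s, ha]
          rfl
        · show G hC.1.choose ≠ none
          rw [hGeq hC.1.choose_spec]
          exact fun hh => Option.some_ne_none _ hh
        · intro a ha s
          show G (a ⊛ s) ≠ none
          rw [hG a s]
          obtain ⟨q, hq⟩ := Option.ne_none_iff_exists'.mp ha
          rw [hq]
          exact fun hh => Option.some_ne_none _ hh
        · ext y
          by_cases h : G y = none <;> simp [h]
        · exact Set.eq_empty_iff_forall_notMem.mpr fun y hy => hy.2 hy.1
      refine ⟨fun x => (G x).getD q₀, ?_, ?_⟩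
      · intro a s
        obtain ⟨q, hq⟩ := Option.ne_none_iff_exists'.mp (hGsome a)
        show (G (a ⊛ s)).getD q₀ = (G a).getD q₀ ⊛ s
        rw [hG a s, hq]
        rfl
      · intro c hc
        show (G c).getD q₀ = f c
        rw [hGeq hc]
        rfl
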